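/- Let f, g : ℝ → ℝ be continuously differentiable and let α be the 1-form α = g(ρ)dθ + (f(ρ)/2π)dφ on ℝ³ with coordinates (ρ,φ,θ), i.e. α_{(ρ,φ,θ)}(u₁,u₂,u₃) = (f(ρ)/(2π))·u₂ + g(ρ)·u₃. Then for every point p = (ρ,φ,θ), the value of the 3-form α ∧ dα on the standard basis (e₁,e₂,e₃) of ℝ³, namely α_p(e₁)·dα_p(e₂,e₃) − α_p(e₂)·dα_p(e₁,e₃) + α_p(e₃)·dα_p(e₁,e₂), equals (f'(ρ)·g(ρ) − f(ρ)·g'(ρ))/(2π). (Consequently α is a positive contact form away from ρ = 0 exactly when f'g − fg' > 0.) -/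

import Mathlib

open Real

/-- Contact condition of Lemma 2.6: for the 1-form `α = g(ρ)dθ + (f(ρ)/2π)dφ` on `ℝ³`
with coordinates `(ρ, φ, θ)`, the 3-form `α ∧ dα` evaluated on the standard basis
equals `(f'g - fg')/(2π)`. -/
theorem contact_condition_solid_torus
    (f g : ℝ → ℝ) (hf : ContDiff ℝ 1 f) (hg : ContDiff ℝ 1 g)
    (α : (ℝ × ℝ × ℝ) → ((ℝ × ℝ × ℝ) →L[ℝ] ℝ))
    (hα : ∀ p u, α p u = f p.1 / (2 * π) * u.2.1 + g p.1 * u.2.2)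
    (dα : (ℝ × ℝ × ℝ) → (ℝ × ℝ × ℝ) → (ℝ × ℝ × ℝ) → ℝ)
    (hdα : ∀ p u v, dα p u v = (fderiv ℝ α p u) v - (fderiv ℝ α p v) u)
    (ρ φ θ : ℝ) :
    α (ρ, φ, θ) (1, 0, 0) * dα (ρ, φ, θ) (0, 1, 0) (0, 0, 1)
      - α (ρ, φ, θ) (0, 1, 0) * dα (ρ, φ, θ) (1, 0, 0) (0, 0, 1)
      + α (ρ, φ, θ) (0, 0, 1) * dα (ρ, φ, θ) (1, 0, 0) (0, 1, 0)
    = (deriv f ρ * g ρ - f ρ * deriv g ρ) / (2 * π) := by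
  set L2 : (ℝ × ℝ × ℝ) →L[ℝ] ℝ :=
    (ContinuousLinearMap.fst ℝ ℝ ℝ).comp (ContinuousLinearMap.snd ℝ ℝ (ℝ × ℝ)) with hL2
  set L3 : (ℝ × ℝ × ℝ) →L[ℝ] ℝ :=
    (ContinuousLinearMap.snd ℝ ℝ ℝ).comp (ContinuousLinearMap.snd ℝ ℝ (ℝ × ℝ)) with hL3
  have hαeq : α = fun p => (f p.1 / (2 * π)) • L2 + (g p.1) • L3 := by
    funext p
    apply ContinuousLinearMap.ext
    intro u
    simp [hα, hL2, hL3]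
  set p : ℝ × ℝ × ℝ := (ρ, φ, θ) with hp
  have hf1 : HasFDerivAt (fun q : ℝ × ℝ × ℝ => f q.1 / (2 * π))
      ((deriv f ρ / (2 * π)) • ContinuousLinearMap.fst ℝ ℝ (ℝ × ℝ)) p := by
    have h1 : HasFDerivAt (fun q : ℝ × ℝ × ℝ => f q.1)
        ((ContinuousLinearMap.smulRight (1 : ℝ →L[ℝ] ℝ) (deriv f ρ)).comp
          (ContinuousLinearMap.fst ℝ ℝ (ℝ × ℝ))) p :=
      (((hf.differentiable one_ne_zero) ρ).hasDerivAt.hasFDerivAt).comp p hasFDerivAt_fst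
    have h2 := h1.mul_const ((2 * π)⁻¹)
    simp only [div_eq_mul_inv]
    refine h2.congr_fderiv ?_
    apply ContinuousLinearMap.ext
    intro u
    simp [mul_comm, div_eq_mul_inv, mul_assoc]
  have hg1 : HasFDerivAt (fun q : ℝ × ℝ × ℝ => g q.1)
      ((deriv g ρ) • ContinuousLinearMap.fst ℝ ℝ (ℝ × ℝ)) p := by
    have h1 : HasFDerivAt (fun q : ℝ × ℝ × ℝ => g q.1)
        ((ContinuousLinearMap.smulRight (1 : ℝ →L[ℝ] ℝ) (deriv g ρ)).comp
          (ContinuousLinearMap.fst ℝ ℝ (ℝ × ℝ))) p :=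
      (((hg.differentiable one_ne_zero) ρ).hasDerivAt.hasFDerivAt).comp p hasFDerivAt_fst
    refine h1.congr_fderiv ?_
    apply ContinuousLinearMap.ext
    intro u
    simp [mul_comm]
  have hD : HasFDerivAt α
      (((deriv f ρ / (2 * π)) • ContinuousLinearMap.fst ℝ ℝ (ℝ × ℝ)).smulRight L2 +
        ((deriv g ρ) • ContinuousLinearMap.fst ℝ ℝ (ℝ × ℝ)).smulRight L3) p := by
    rw [hαeq]
    have h2 := hf1.smul (hasFDerivAt_const L2 p)
    have h3 := hg1.smul (hasFDerivAt_const L3 p)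
    have := h2.add h3
    refine this.congr_fderiv ?_
    simp
  have hfd := hD.fderiv
  have key : ∀ u v : ℝ × ℝ × ℝ,
      (fderiv ℝ α p u) v = (deriv f ρ / (2 * π)) * u.1 * v.2.1 + (deriv g ρ) * u.1 * v.2.2 := by
    intro u v
    rw [hfd]
    simp [hL2, hL3]
  have hπ : (2 * π) ≠ 0 := by positivity
  rw [hdα, hdα, hdα, hα, hα, hα, key, key, key, key, key, key]
  simp
  field_simp
  ring
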